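/- Let E' be a collection of morphisms in a category C containing all equivalences and stable under composition, base change, and taking diagonals. Let τ be a Grothendieck topology on C, and let E be the collection of maps f : X → Y such that X admits a small τ-cover by maps X' → X in E' with the composite X' → X → Y also in E'. Then E contains all equivalences and is stable under composition, base change, and taking diagonals. -/

import Mathlib

open CategoryTheory Limits

universe v u

variable {C : Type u} [Category.{v} C]

/-- Given a Grothendieck topology `τ` and a class `E'` of morphisms, `localClass τ E' f`
holds for `f : X ⟶ Y` when `X` admits a small `τ`-cover by maps `X' ⟶ X` in `E'` whose
composites `X' ⟶ X ⟶ Y` are also in `E'`. -/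
def localClass (τ : GrothendieckTopology C) (E' : MorphismProperty C) :
    MorphismProperty C := fun X _Y f =>
  ∃ R : Presieve X, Sieve.generate R ∈ τ X ∧
    ∀ ⦃W : C⦄ ⦃g : W ⟶ X⦄, R g → E' g ∧ E' (g ≫ f)

/-- If `E'` contains all isomorphisms and is stable under composition, base change and
taking diagonals, then so is the class `E = localClass τ E'` of maps that are
`τ`-locally on the source given by maps in `E'`. -/
theorem localClass_isos_comp_baseChange_diagonal [HasPullbacks C]
    (τ : GrothendieckTopology C) (E' : MorphismProperty C)
    (hiso : ∀ {X Y : C} (e : X ⟶ Y), IsIso e → E' e)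
    (hcomp : ∀ {X Y Z : C} (f : X ⟶ Y) (g : Y ⟶ Z), E' f → E' g → E' (f ≫ g))
    (hbc : ∀ {X Y Y' S : C} {f : X ⟶ S} {g : Y ⟶ S} {f' : Y' ⟶ Y} {g' : Y' ⟶ X},
      IsPullback f' g' g f → E' g → E' g')
    (hdiag : ∀ {X Y : C} (f : X ⟶ Y), E' f → E' (pullback.diagonal f)) :
    (∀ {X Y : C} (e : X ⟶ Y), IsIso e → localClass τ E' e) ∧
    (∀ {X Y Z : C} (f : X ⟶ Y) (g : Y ⟶ Z),
      localClass τ E' f → localClass τ E' g → localClass τ E' (f ≫ g)) ∧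
    (∀ {X Y Y' S : C} {f : X ⟶ S} {g : Y ⟶ S} {f' : Y' ⟶ Y} {g' : Y' ⟶ X},
      IsPullback f' g' g f → localClass τ E' g → localClass τ E' g') ∧
    (∀ {X Y : C} (f : X ⟶ Y), localClass τ E' f → localClass τ E' (pullback.diagonal f)) := by
  refine ⟨?_, ?_, ?_, ?_⟩
  · -- isomorphisms
    intro X Y e he
    refine ⟨Presieve.singleton (𝟙 X), ?_, ?_⟩
    · refine τ.superset_covering ?_ (τ.top_mem X)
      intro Z g _
      exact ⟨X, g, 𝟙 X, Presieve.singleton.mk, by simp⟩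
    · rintro W g ⟨⟩
      exact ⟨hiso _ inferInstance, by
        rw [Category.id_comp]; exact hiso e he⟩
  · -- composition
    intro X Y Z f g hf hg
    obtain ⟨R, hR, hRE⟩ := hf
    obtain ⟨S, hS, hSE⟩ := hg
    refine ⟨R.bind (fun W a _ => Presieve.pullbackArrows (a ≫ f) S), ?_, ?_⟩
    · refine τ.superset_covering ?_
        (τ.bind_covering (S := Sieve.generate R)
          (R := fun W a _ => (Sieve.generate S).pullback (a ≫ f)) hR
          (fun W a _ => τ.pullback_stable _ hS))
      rintro U u ⟨W', k, h, hh, hk, rfl⟩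
      obtain ⟨W, c, a, ha, rfl⟩ := hh
      obtain ⟨V, d, b, hb, hd⟩ := hk
      refine ⟨pullback b (a ≫ f), pullback.lift d (k ≫ c) ?_ , pullback.snd b (a ≫ f) ≫ a,
        ⟨W, pullback.snd b (a ≫ f), a, ha, Presieve.pullbackArrows.mk _ b hb, rfl⟩, ?_⟩
      · simpa using hd
      · rw [pullback.lift_snd_assoc, Category.assoc]
    · rintro U u ⟨W, g0, a, ha, hg0, rfl⟩
      cases hg0 with
      | mk V b hb =>
        have hsnd : E' (pullback.snd b (a ≫ f)) :=
          hbc (IsPullback.of_hasPullback b (a ≫ f)) (hSE hb).1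
        have hfst : E' (pullback.fst b (a ≫ f)) :=
          hbc (IsPullback.of_hasPullback b (a ≫ f)).flip (hRE ha).2
        refine ⟨hcomp _ _ hsnd (hRE ha).1, ?_⟩
        have : (pullback.snd b (a ≫ f) ≫ a) ≫ f ≫ g
            = pullback.fst b (a ≫ f) ≫ (b ≫ g) := by
          simp only [pullback.condition_assoc, Category.assoc]
        rw [this]
        exact hcomp _ _ hfst (hSE hb).2
  · -- base change
    intro X Y Y' S f g f' g' pb hg
    obtain ⟨R, hR, hRE⟩ := hg
    refine ⟨Presieve.pullbackArrows f' R, ?_, ?_⟩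
    · rw [Sieve.pullbackArrows_comm]
      exact τ.pullback_stable f' hR
    · rintro Q h hh
      cases hh with
      | mk V b hb =>
        refine ⟨hbc (IsPullback.of_hasPullback b f') (hRE hb).1, ?_⟩
        exact hbc ((IsPullback.of_hasPullback b f').paste_vert pb) (hRE hb).2
  · -- diagonal
    intro X Y f hf
    obtain ⟨R, hR, hRE⟩ := hf
    refine ⟨R, hR, ?_⟩
    intro W a ha
    refine ⟨(hRE ha).1, ?_⟩
    have haE : E' a := (hRE ha).1
    have hafE : E' (a ≫ f) := (hRE ha).2
    -- the two comparison maps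
    let m₁ : pullback (a ≫ f) (a ≫ f) ⟶ pullback (a ≫ f) f :=
      pullback.map (a ≫ f) (a ≫ f) (a ≫ f) f (𝟙 W) a (𝟙 Y) (by simp) (by simp)
    let m₂ : pullback (a ≫ f) f ⟶ pullback f f :=
      pullback.map (a ≫ f) f f f a (𝟙 X) (𝟙 Y) (by simp) (by simp)
    have sqA : IsPullback (pullback.snd (a ≫ f) (a ≫ f)) m₁ a (pullback.snd (a ≫ f) f) := by
      refine IsPullback.of_bot ?_ (by rw [pullback.lift_snd]) (IsPullback.of_hasPullback (a ≫ f) f).flip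
      have : m₁ ≫ pullback.fst (a ≫ f) f = pullback.fst (a ≫ f) (a ≫ f) := by rw [pullback.lift_fst, Category.comp_id]
      rw [this]
      exact (IsPullback.of_hasPullback (a ≫ f) (a ≫ f)).flip
    have sqB : IsPullback (pullback.fst (a ≫ f) f) m₂ a (pullback.fst f f) := by
      refine IsPullback.of_bot ?_ (by rw [pullback.lift_fst]) (IsPullback.of_hasPullback f f)
      have : m₂ ≫ pullback.snd f f = pullback.snd (a ≫ f) f := by rw [pullback.lift_snd, Category.comp_id]
      rw [this]
      exact IsPullback.of_hasPullback (a ≫ f) f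
    have hm₁ : E' m₁ := hbc sqA haE
    have hm₂ : E' m₂ := hbc sqB haE
    have hΔ : E' (pullback.diagonal (a ≫ f)) := hdiag _ hafE
    have key : a ≫ pullback.diagonal f = pullback.diagonal (a ≫ f) ≫ m₁ ≫ m₂ := by
      apply pullback.hom_ext
      · simp only [Category.assoc, m₁, m₂]
        rw [pullback.lift_fst, pullback.lift_fst_assoc, Category.comp_id, pullback.diagonal_fst_assoc, pullback.diagonal_fst, Category.comp_id]
      · simp only [Category.assoc, m₁, m₂]
        rw [pullback.lift_snd, pullback.lift_snd_assoc, Category.comp_id, pullback.diagonal_snd_assoc, pullback.diagonal_snd, Category.comp_id]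
    rw [key]
    exact hcomp _ _ hΔ (hcomp _ _ hm₁ hm₂)
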